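/- Let G be a word hyperbolic group with finite generating set A and H a finitely generated subgroup with finite generating set B. If the inclusion (H,d_B) ⊆ (G,d_A) is a quasi-isometric embedding, then H is a quasiconvex subset of the Cayley graph Γ(G,A): there is ε > 0 such that every d_A-geodesic from 1 to an element h ∈ H lies in the ε-neighborhood of H. -/

import Mathlib

def evalWord {A G : Type} [Group G] (a : A → G) (w : List A) : G :=
  (w.map a).prod

/-- Word length of `g ∈ G` with respect to the marking `a : A → G`. -/
noncomputable def wlen {A G : Type} [Group G] (a : A → G) (g : G) : ℕ :=
  sInf {n | ∃ w : List A, evalWord a w = g ∧ w.length = n}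

/-- The word metric on `G`. -/
noncomputable def wdist {A G : Type} [Group G] (a : A → G) (g h : G) : ℕ :=
  wlen a (g⁻¹ * h)

/-- Word length of an element of a subgroup `H` with respect to a generating set `B ⊆ H`. -/
noncomputable def wordLength {K : Type} [Group K] (S : Set K) (g : K) : ℕ :=
  sInf {n | ∃ w : List K, (∀ x ∈ w, x ∈ S) ∧ w.prod = g ∧ w.length = n}

/-- Gromov's four-point hyperbolicity condition for the word metric. -/
def FourPointHyperbolic {A G : Type} [Group G] (a : A → G) (δ : ℝ) : Prop :=
  ∀ x y z w : G, (wdist a x y : ℝ) + wdist a z w ≤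
    max ((wdist a x z : ℝ) + wdist a y w) ((wdist a x w : ℝ) + wdist a y z) + 2 * δ

namespace QCproof

variable {A G : Type} [Group G] (a : A → G)

lemma evalWord_append (u v : List A) :
    evalWord a (u ++ v) = evalWord a u * evalWord a v := by
  simp [evalWord]

lemma evalWord_nil : evalWord a ([] : List A) = 1 := rfl

lemma wlen_le (w : List A) : wlen a (evalWord a w) ≤ w.length :=
  Nat.sInf_le ⟨w, rfl, rfl⟩

lemma wlen_le' {w : List A} {g : G} (h : evalWord a w = g) : wlen a g ≤ w.length :=
  Nat.sInf_le ⟨w, h, rfl⟩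

variable (hgen : ∀ g : G, ∃ w : List A, evalWord a w = g)
include hgen

lemma wlen_spec (g : G) : ∃ w : List A, evalWord a w = g ∧ w.length = wlen a g := by
  have h : wlen a g ∈ {n | ∃ w : List A, evalWord a w = g ∧ w.length = n} := by
    apply Nat.sInf_mem
    obtain ⟨w, hw⟩ := hgen g
    exact ⟨w.length, w, hw, rfl⟩
  exact h

omit hgen in
lemma wlen_one : wlen a (1 : G) = 0 :=
  Nat.le_zero.mp (wlen_le' a (evalWord_nil a))

lemma wlen_mul (g h : G) : wlen a (g * h) ≤ wlen a g + wlen a h := by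
  obtain ⟨u, hu, hul⟩ := wlen_spec a hgen g
  obtain ⟨v, hv, hvl⟩ := wlen_spec a hgen h
  have : evalWord a (u ++ v) = g * h := by rw [evalWord_append, hu, hv]
  calc wlen a (g * h) ≤ (u ++ v).length := wlen_le' a this
    _ = wlen a g + wlen a h := by simp [hul, hvl]

lemma wlen_inv_le (hinv : ∀ x : A, ∃ y : A, a y = (a x)⁻¹) (g : G) :
    wlen a g⁻¹ ≤ wlen a g := by
  obtain ⟨u, hu, hul⟩ := wlen_spec a hgen g
  have key : ∀ w : List A, ∃ v : List A, evalWord a v = (evalWord a w)⁻¹ ∧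
      v.length = w.length := by
    intro w
    induction w with
    | nil => exact ⟨[], by simp [evalWord], rfl⟩
    | cons x t ih =>
      obtain ⟨v, hv, hvl⟩ := ih
      obtain ⟨y, hy⟩ := hinv x
      refine ⟨v ++ [y], ?_, by simp [hvl]⟩
      rw [evalWord_append, hv]
      simp [evalWord, mul_inv_rev, hy]
  obtain ⟨v, hv, hvl⟩ := key u
  calc wlen a g⁻¹ ≤ v.length := wlen_le' a (by rw [hv, hu])
    _ = wlen a g := by rw [hvl, hul]

lemma wlen_inv (hinv : ∀ x : A, ∃ y : A, a y = (a x)⁻¹) (g : G) :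
    wlen a g⁻¹ = wlen a g :=
  le_antisymm (wlen_inv_le a hgen hinv g)
    (by simpa using wlen_inv_le a hgen hinv g⁻¹)

lemma wdist_comm (hinv : ∀ x : A, ∃ y : A, a y = (a x)⁻¹) (g h : G) :
    wdist a g h = wdist a h g := by
  unfold wdist
  rw [← wlen_inv a hgen hinv (g⁻¹ * h)]
  simp [mul_inv_rev]

lemma wdist_triangle (x y z : G) : wdist a x z ≤ wdist a x y + wdist a y z := by
  unfold wdist
  have : x⁻¹ * z = (x⁻¹ * y) * (y⁻¹ * z) := by group
  rw [this]
  exact wlen_mul a hgen _ _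

omit hgen in
lemma wdist_self (x : G) : wdist a x x = 0 := by
  unfold wdist; simp [wlen_one a]

end QCproof

namespace Part2
variable {A G : Type} [Group G] (a : A → G)
variable (hgen : ∀ g : G, ∃ w : List A, evalWord a w = g)
open QCproof
include hgen

/-- subsegments of geodesic words are geodesic -/
lemma geodesic_segment {w : List A} {h : G} (hw : evalWord a w = h)
    (hlen : w.length = wlen a h) {i j : ℕ} (hij : i ≤ j) (hj : j ≤ w.length) :
    wdist a (evalWord a (w.take i)) (evalWord a (w.take j)) = j - i := by
  set x := evalWord a (w.take i)
  set y := evalWord a (w.take j)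
  have hsplit : w.take j = w.take i ++ (w.drop i).take (j - i) := by
    conv_lhs => rw [show j = i + (j - i) by omega]
    rw [List.take_add]
  have hxy : x⁻¹ * y = evalWord a ((w.drop i).take (j - i)) := by
    show x⁻¹ * evalWord a (w.take j) = _
    rw [hsplit, evalWord_append]
    exact inv_mul_cancel_left _ _
  have hupper : wdist a x y ≤ j - i := by
    unfold wdist
    rw [hxy]
    calc wlen a _ ≤ ((w.drop i).take (j - i)).length := wlen_le a _
      _ ≤ j - i := by simp
  have h1 : wlen a x ≤ i := by
    calc wlen a x ≤ (w.take i).length := wlen_le a _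
      _ ≤ i := by simp
  have h2 : wlen a (y⁻¹ * h) ≤ w.length - j := by
    have : y⁻¹ * h = evalWord a (w.drop j) := by
      have := List.take_append_drop j w
      have hw2 : evalWord a (w.take j ++ w.drop j) = h := by rw [this, hw]
      rw [evalWord_append] at hw2
      rw [← hw2]; exact inv_mul_cancel_left _ _
    rw [this]
    calc wlen a _ ≤ (w.drop j).length := wlen_le a _
      _ ≤ w.length - j := by simp
  have hlow : w.length ≤ i + wdist a x y + (w.length - j) := by
    have e1 : h = x * (x⁻¹ * y) * (y⁻¹ * h) := by group
    calc w.length = wlen a h := hlen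
      _ = wlen a (x * (x⁻¹ * y) * (y⁻¹ * h)) := by rw [← e1]
      _ ≤ wlen a (x * (x⁻¹ * y)) + wlen a (y⁻¹ * h) := wlen_mul a hgen _ _
      _ ≤ wlen a x + wlen a (x⁻¹ * y) + wlen a (y⁻¹ * h) := by
          have := wlen_mul a hgen x (x⁻¹ * y); omega
      _ ≤ i + wdist a x y + (w.length - j) := by
          unfold wdist; omega
  omega

end Part2

namespace Part3
variable {K : Type} [Group K] (S : Set K)

lemma wordLength_le' {w : List K} {g : K} (hmem : ∀ x ∈ w, x ∈ S) (h : w.prod = g) :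
    wordLength S g ≤ w.length :=
  Nat.sInf_le ⟨w, hmem, h, rfl⟩

variable (hSgen : Subgroup.closure S = ⊤) (hSinv : ∀ x ∈ S, x⁻¹ ∈ S)
include hSgen hSinv

lemma wordLength_spec (g : K) :
    ∃ w : List K, (∀ x ∈ w, x ∈ S) ∧ w.prod = g ∧ w.length = wordLength S g := by
  have hg : g ∈ Subgroup.closure S := by rw [hSgen]; trivial
  have hg2 : g ∈ Submonoid.closure (S ∪ S⁻¹) := by
    rw [← Subgroup.closure_toSubmonoid] at *
    exact hg
  obtain ⟨l, hl, hlp⟩ := Submonoid.exists_list_of_mem_closure hg2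
  have hl' : ∀ x ∈ l, x ∈ S := by
    intro x hx
    rcases hl x hx with h | h
    · exact h
    · simpa using hSinv _ h
  have : wordLength S g ∈ {n | ∃ w : List K, (∀ x ∈ w, x ∈ S) ∧ w.prod = g ∧ w.length = n} :=
    Nat.sInf_mem ⟨l.length, l, hl', hlp, rfl⟩
  exact this

lemma wordLength_mul (g h : K) :
    wordLength S (g * h) ≤ wordLength S g + wordLength S h := by
  obtain ⟨u, hu, hup, hul⟩ := wordLength_spec S hSgen hSinv g
  obtain ⟨v, hv, hvp, hvl⟩ := wordLength_spec S hSgen hSinv h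
  have hm : ∀ x ∈ u ++ v, x ∈ S := by
    intro x hx; rcases List.mem_append.mp hx with h | h
    exacts [hu x h, hv x h]
  calc wordLength S (g * h) ≤ (u ++ v).length :=
        wordLength_le' S hm (by rw [List.prod_append, hup, hvp])
    _ = wordLength S g + wordLength S h := by simp [hul, hvl]

/-- subsegments of geodesic B-words are geodesic -/
lemma wordLength_segment {l : List K} {h : K} (hmem : ∀ x ∈ l, x ∈ S)
    (hp : l.prod = h) (hlen : l.length = wordLength S h)
    {i j : ℕ} (hij : i ≤ j) (hj : j ≤ l.length) :
    wordLength S ((l.take i).prod⁻¹ * (l.take j).prod) = j - i := by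
  set x := (l.take i).prod
  set y := (l.take j).prod
  have hsplit : l.take j = l.take i ++ (l.drop i).take (j - i) := by
    conv_lhs => rw [show j = i + (j - i) by omega]
    rw [List.take_add]
  have hxy : x⁻¹ * y = ((l.drop i).take (j - i)).prod := by
    show x⁻¹ * (l.take j).prod = _
    rw [hsplit, List.prod_append]
    exact inv_mul_cancel_left _ _
  have hmid : ∀ z ∈ (l.drop i).take (j - i), z ∈ S := fun z hz =>
    hmem z (List.mem_of_mem_drop (List.mem_of_mem_take hz))
  have hupper : wordLength S (x⁻¹ * y) ≤ j - i := by
    rw [hxy]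
    calc wordLength S _ ≤ ((l.drop i).take (j - i)).length := wordLength_le' S hmid rfl
      _ ≤ j - i := by simp
  have h1 : wordLength S x ≤ i := by
    calc wordLength S x ≤ (l.take i).length :=
          wordLength_le' S (fun z hz => hmem z (List.mem_of_mem_take hz)) rfl
      _ ≤ i := by simp
  have h2 : wordLength S (y⁻¹ * h) ≤ l.length - j := by
    have he : y⁻¹ * h = (l.drop j).prod := by
      have := List.take_append_drop j l
      have hw2 : (l.take j ++ l.drop j).prod = h := by rw [this, hp]
      rw [List.prod_append] at hw2
      rw [← hw2]; exact inv_mul_cancel_left _ _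
    rw [he]
    calc wordLength S _ ≤ (l.drop j).length :=
          wordLength_le' S (fun z hz => hmem z (List.mem_of_mem_drop hz)) rfl
      _ ≤ l.length - j := by simp
  have hlow : l.length ≤ i + wordLength S (x⁻¹ * y) + (l.length - j) := by
    have e1 : h = x * (x⁻¹ * y) * (y⁻¹ * h) := by group
    calc l.length = wordLength S h := hlen
      _ = wordLength S (x * (x⁻¹ * y) * (y⁻¹ * h)) := by rw [← e1]
      _ ≤ wordLength S (x * (x⁻¹ * y)) + wordLength S (y⁻¹ * h) :=
          wordLength_mul S hSgen hSinv _ _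
      _ ≤ wordLength S x + wordLength S (x⁻¹ * y) + wordLength S (y⁻¹ * h) := by
          have := wordLength_mul S hSgen hSinv x (x⁻¹ * y); omega
      _ ≤ i + wordLength S (x⁻¹ * y) + (l.length - j) := by omega
  omega

end Part3

namespace Part4
open QCproof
variable {A G : Type} [Group G] (a : A → G)

/-- Gromov product based at `m`. -/
noncomputable def gp (m x y : G) : ℝ :=
  ((wdist a x m : ℝ) + wdist a y m - wdist a x y) / 2

variable (hgen : ∀ g : G, ∃ w : List A, evalWord a w = g)
  (hinv : ∀ x : A, ∃ y : A, a y = (a x)⁻¹)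
  {δ : ℝ} (hhyp : FourPointHyperbolic a δ)
include hgen hinv hhyp

lemma gp_hyp (m x y z : G) :
    min (gp a m x z) (gp a m z y) - δ ≤ gp a m x y := by
  have h4 := hhyp x y z m
  have c1 : (wdist a z y : ℝ) = wdist a y z := by rw [wdist_comm a hgen hinv]
  have hl := min_le_left (gp a m x z) (gp a m z y)
  have hr := min_le_right (gp a m x z) (gp a m z y)
  unfold gp at *
  simp only [c1] at hl hr ⊢
  rcases max_choice ((wdist a x z : ℝ) + wdist a y m) ((wdist a x m : ℝ) + wdist a y z)
    with he | he <;> rw [he] at h4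
  · linarith
  · linarith

lemma chain (hδ : 0 ≤ δ) (m : G) (E : ℝ) :
    ∀ k N : ℕ, ∀ c : ℕ → G, 1 ≤ N → N ≤ 2 ^ k →
      (∀ i < N, E ≤ gp a m (c i) (c (i + 1))) →
      E - k * δ ≤ gp a m (c 0) (c N) := by
  intro k
  induction k with
  | zero =>
    intro N c h1 h2 hg
    have hN : N = 1 := by simpa using Nat.le_antisymm h2 h1
    subst hN
    simpa using hg 0 (by omega)
  | succ k ih =>
    intro N c h1 h2 hg
    by_cases hsmall : N ≤ 2 ^ k
    · have h := ih N c h1 hsmall hg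
      have : (k : ℝ) * δ ≤ (k + 1 : ℕ) * δ := by
        push_cast
        nlinarith
      linarith
    · have hpow : (2 : ℕ) ^ (k + 1) = 2 * 2 ^ k := by ring
      rw [hpow] at h2
      have hN2 : 2 ≤ N := by
        by_contra hcon
        push_neg at hcon
        have hN1 : N = 1 := by omega
        exact hsmall (by rw [hN1]; exact Nat.one_le_two_pow)
      set M := N / 2 with hM
      have hmod := Nat.div_add_mod N 2
      have hmlt : N % 2 < 2 := Nat.mod_lt _ (by omega)
      have hM1 : 1 ≤ M := by omega
      have hM2 : M ≤ 2 ^ k := by omega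
      have hNM1 : 1 ≤ N - M := by omega
      have hNM2 : N - M ≤ 2 ^ k := by omega
      have ha := ih M c hM1 hM2 (fun i hi => hg i (by omega))
      have hb := ih (N - M) (fun i => c (M + i)) hNM1 hNM2
        (fun i hi => hg (M + i) (by omega))
      have hb' : E - k * δ ≤ gp a m (c M) (c N) := by
        have hb2 : E - k * δ ≤ gp a m (c (M + 0)) (c (M + (N - M))) := hb
        rw [show M + (N - M) = N from by omega, Nat.add_zero] at hb2
        exact hb2
      have hmin := gp_hyp a hgen hinv hhyp m (c 0) (c N) (c M)
      have hle : E - k * δ ≤ min (gp a m (c 0) (c M)) (gp a m (c M) (c N)) :=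
        le_min ha hb'
      have : ((k + 1 : ℕ) : ℝ) = (k : ℝ) + 1 := by push_cast; ring
      rw [this]
      linarith

end Part4

namespace Part5

lemma numeric (δ' C' : ℝ) (hδ : 1 ≤ δ') (hC : 1 ≤ C') :
    ∃ ε : ℝ, 0 < ε ∧ ∀ D k N : ℕ, 2 ≤ N → (N : ℝ) ≤ 6 * C' * D + C' ^ 2 + 2 →
      2 ^ (k - 1) < N → 1 ≤ k → ((D : ℝ) ≤ D / 2 + C' + k * δ') → (D : ℝ) ≤ ε := by
  set L := Real.log 2 with hLdef
  have hL : 0 < L := Real.log_pos one_lt_two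
  set α := L / (48 * δ' * C') with hαdef
  have hα : 0 < α := div_pos hL (by nlinarith)
  set R := C' + δ' + C' / 48 + 1 / 24 + (δ' / L) * (-1 - Real.log α) with hRdef
  refine ⟨max 1 ((8 / 3) * R), lt_of_lt_of_le zero_lt_one (le_max_left _ _), ?_⟩
  intro D k N hN2 hNb hpow hk1 hD
  have hNR : (2 : ℝ) ≤ N := by exact_mod_cast hN2
  have hNpos : (0 : ℝ) < N := by linarith
  have hpowR : (2 : ℝ) ^ (k - 1) < N := by exact_mod_cast hpow
  have hlogpow : ((k : ℝ) - 1) * L ≤ Real.log N := by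
    have h1 : Real.log ((2 : ℝ) ^ (k - 1)) ≤ Real.log N :=
      Real.log_le_log (by positivity) hpowR.le
    rw [Real.log_pow] at h1
    have hcast : ((k - 1 : ℕ) : ℝ) = (k : ℝ) - 1 := by
      rw [Nat.cast_sub hk1]; norm_num
    rw [hcast] at h1
    exact h1
  have hkb : (k : ℝ) * δ' ≤ δ' + (δ' / L) * Real.log N := by
    have h2 : (k : ℝ) - 1 ≤ Real.log N / L := (le_div_iff₀ hL).mpr hlogpow
    have h3 := mul_le_mul_of_nonneg_left h2 (by linarith : (0 : ℝ) ≤ δ')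
    have he : δ' * (Real.log N / L) = (δ' / L) * Real.log N := by ring
    rw [he] at h3
    nlinarith
  have hlogN : Real.log N ≤ α * N - 1 - Real.log α := by
    have hpos : 0 < α * N := mul_pos hα hNpos
    have h := Real.log_le_sub_one_of_pos hpos
    rw [Real.log_mul (ne_of_gt hα) (ne_of_gt hNpos)] at h
    linarith
  have hδL : (0 : ℝ) ≤ δ' / L := by positivity
  have h4 : (δ' / L) * Real.log N ≤ (δ' / L) * (α * N) + (δ' / L) * (-1 - Real.log α) := by
    have := mul_le_mul_of_nonneg_left hlogN hδL
    nlinarith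
  have h5 : (δ' / L) * (α * N) = (N : ℝ) / (48 * C') := by
    rw [hαdef]
    field_simp
  have h6 : (N : ℝ) / (48 * C') ≤ (D : ℝ) / 8 + C' / 48 + 1 / 24 := by
    have h48 : (0 : ℝ) < 48 * C' := by linarith
    have ha : (N : ℝ) / (48 * C') ≤ (6 * C' * D + C' ^ 2 + 2) / (48 * C') :=
      (div_le_div_iff_of_pos_right h48).mpr hNb
    have heq : (6 * C' * (D : ℝ) + C' ^ 2 + 2) / (48 * C') =
        (D : ℝ) / 8 + C' / 48 + 1 / (24 * C') := by
      field_simp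
      ring
    have h124 : 1 / (24 * C') ≤ 1 / 24 := by
      rw [div_le_div_iff₀ (by linarith) (by norm_num)]
      nlinarith
    rw [heq] at ha
    linarith
  have hfin : (3 / 8) * (D : ℝ) ≤ R := by
    rw [hRdef]
    linarith
  have := le_max_right (1 : ℝ) ((8 / 3) * R)
  linarith

end Part5


open QCproof Part2 Part3 Part4 Part5

/-- In a word hyperbolic group, a quasi-isometrically embedded subgroup is a quasiconvex
subset of the Cayley graph: geodesics from `1` to elements of `H` stay uniformly close
to `H`. -/
theorem quasiconvex_of_qi_embedded
    {A G : Type} [Fintype A] [Group G] (a : A → G)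
    (hinv : ∀ x : A, ∃ y : A, a y = (a x)⁻¹)
    (hgen : ∀ g : G, ∃ w : List A, evalWord a w = g)
    (δ : ℝ) (hδ : 0 ≤ δ) (hhyp : FourPointHyperbolic a δ)
    (H : Subgroup G) (B : Set H)
    (hBfin : B.Finite) (hBinv : ∀ x ∈ B, x⁻¹ ∈ B) (hBgen : Subgroup.closure B = ⊤)
    (C : ℝ) (hC : 0 < C)
    (hqi : ∀ h : H, (wordLength B h : ℝ) / C - C ≤ wlen a (h : G) ∧
      (wlen a (h : G) : ℝ) ≤ C * wordLength B h + C) :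
    ∃ ε : ℝ, 0 < ε ∧ ∀ h : G, h ∈ H → ∀ w : List A, evalWord a w = h →
      w.length = wlen a h → ∀ p : List A, p <+: w →
        ∃ u : List A, (u.length : ℝ) ≤ ε ∧ evalWord a p * evalWord a u ∈ H := by
  -- normalize the constants
  set C' := C + 1 with hC'def
  have hC'1 : (1 : ℝ) ≤ C' := by linarith
  have hC'0 : (0 : ℝ) < C' := by linarith
  set δ' := δ + 1 with hδ'def
  have hδ'1 : (1 : ℝ) ≤ δ' := by linarith
  have hδ'0 : (0 : ℝ) ≤ δ' := by linarith
  have hhyp' : FourPointHyperbolic a δ' := by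
    intro x y z w
    have h := hhyp x y z w
    have : max ((wdist a x z : ℝ) + wdist a y w) ((wdist a x w : ℝ) + wdist a y z) + 2 * δ ≤
        max ((wdist a x z : ℝ) + wdist a y w) ((wdist a x w : ℝ) + wdist a y z) + 2 * δ' := by
      linarith
    linarith
  have hqi' : ∀ h : H, ((wordLength B h : ℝ) / C' - C' ≤ wlen a (h : G)) ∧
      ((wlen a (h : G) : ℝ) ≤ C' * wordLength B h + C') := by
    intro h
    obtain ⟨h1, h2⟩ := hqi h
    have hw0 : (0 : ℝ) ≤ wordLength B h := Nat.cast_nonneg _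
    constructor
    · have hdd : (wordLength B h : ℝ) / C' ≤ (wordLength B h : ℝ) / C :=
        div_le_div_of_nonneg_left hw0 hC (by linarith)
      linarith
    · nlinarith
  obtain ⟨ε, hε0, hεkey⟩ := numeric δ' C' hδ'1 hC'1
  refine ⟨ε, hε0, ?_⟩
  intro h hH w hw hlen p hp
  -- geodesic B-word for h
  obtain ⟨l, hlB, hlprod, hllen⟩ := wordLength_spec B hBgen hBinv ⟨h, hH⟩
  set n := l.length with hn
  set L := w.length with hL
  set ζ : ℕ → H := fun j => (l.take j).prod with hζ
  set z : ℕ → G := fun j => ((ζ j : H) : G) with hz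
  set g : ℕ → G := fun t => evalWord a (w.take t) with hg
  have hg0 : g 0 = 1 := rfl
  have hgL : g L = h := by
    show evalWord a (w.take L) = h
    rw [hL, List.take_length]
    exact hw
  have hz0 : z 0 = 1 := by simp [hz, hζ]
  have hzn : z n = h := by
    have hc : ζ n = ⟨h, hH⟩ := by
      show (l.take n).prod = _
      rw [hn, List.take_length, hlprod]
    show ((ζ n : H) : G) = h
    rw [hc]
  have hzH : ∀ j, z j ∈ H := fun j => (ζ j).2
  -- geodesic distances along w
  have dg : ∀ i j : ℕ, i ≤ j → j ≤ L → wdist a (g i) (g j) = j - i := by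
    intro i j hij hj
    exact geodesic_segment a hgen hw hlen hij hj
  -- distances between the z's
  have zdist : ∀ i j : ℕ, wdist a (z i) (z j) = wlen a ((((ζ i)⁻¹ * ζ j : H) : G)) := by
    intro i j
    unfold wdist
    norm_cast
  have dB : ∀ i j : ℕ, i ≤ j → j ≤ n → wordLength B ((ζ i)⁻¹ * ζ j) = j - i := by
    intro i j hij hj
    exact wordLength_segment B hBgen hBinv hlB hlprod hllen hij hj
  have dzlow : ∀ i j : ℕ, i ≤ j → j ≤ n →
      ((j : ℝ) - i) / C' - C' ≤ wdist a (z i) (z j) := by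
    intro i j hij hj
    have h1 := (hqi' ((ζ i)⁻¹ * ζ j)).1
    rw [dB i j hij hj] at h1
    rw [zdist]
    have : ((j - i : ℕ) : ℝ) = (j : ℝ) - i := by
      rw [Nat.cast_sub hij]
    rw [this] at h1
    exact h1
  have dzgap : ∀ j : ℕ, j + 1 ≤ n → (wdist a (z j) (z (j + 1)) : ℝ) ≤ 2 * C' := by
    intro j hj
    have h2 := (hqi' ((ζ j)⁻¹ * ζ (j + 1))).2
    rw [dB j (j + 1) (by omega) hj] at h2
    rw [zdist]
    have : ((j + 1 - j : ℕ) : ℕ) = 1 := by omega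
    rw [this] at h2
    push_cast at h2 ⊢
    linarith
  -- distance to the subgroup chain
  have hfne : ∀ t : ℕ, ((Finset.range (n + 1)).image (fun j => wdist a (g t) (z j))).Nonempty :=
    fun t => Finset.Nonempty.image ⟨0, by simp⟩ _
  set f : ℕ → ℕ :=
    fun t => ((Finset.range (n + 1)).image (fun j => wdist a (g t) (z j))).min' (hfne t) with hf
  have hf_le : ∀ t j : ℕ, j ≤ n → f t ≤ wdist a (g t) (z j) := by
    intro t j hj
    exact Finset.min'_le _ _ (Finset.mem_image_of_mem _ (Finset.mem_range.mpr (by omega)))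
  have hf_ex : ∀ t : ℕ, ∃ j ≤ n, wdist a (g t) (z j) = f t := by
    intro t
    have := Finset.min'_mem _ (hfne t)
    rw [Finset.mem_image] at this
    obtain ⟨j, hj, hje⟩ := this
    exact ⟨j, Nat.lt_succ_iff.mp (Finset.mem_range.mp hj), hje⟩
  have hDne : ((Finset.range (L + 1)).image f).Nonempty :=
    Finset.Nonempty.image ⟨0, by simp⟩ _
  set D : ℕ := ((Finset.range (L + 1)).image f).max' hDne with hD
  have hD_le : ∀ t : ℕ, t ≤ L → f t ≤ D := by
    intro t ht
    exact Finset.le_max' _ _ (Finset.mem_image_of_mem _ (Finset.mem_range.mpr (by omega)))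
  have hD_ex : ∃ t0 ≤ L, f t0 = D := by
    have := Finset.max'_mem _ hDne
    rw [Finset.mem_image] at this
    obtain ⟨t0, ht0, hte⟩ := this
    exact ⟨t0, Nat.lt_succ_iff.mp (Finset.mem_range.mp ht0), hte⟩
  obtain ⟨t0, ht0L, ht0D⟩ := hD_ex
  set m : G := g t0 with hm
  have hmz : ∀ j : ℕ, j ≤ n → D ≤ wdist a m (z j) := by
    intro j hj
    have h1 := hf_le t0 j hj
    rw [hm]
    omega
  set tm : ℕ := t0 - 2 * D with htm
  set tp : ℕ := min (t0 + 2 * D) L with htp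
  have htm0 : tm ≤ t0 := by omega
  have htp1 : t0 ≤ tp := by omega
  have htpL : tp ≤ L := by omega
  -- distance from m to the endpoints of the subsegment
  have hd_minus : D ≤ wdist a m (g tm) := by
    by_cases hcase : 2 * D ≤ t0
    · have : wdist a (g tm) (g t0) = t0 - tm := dg tm t0 htm0 (by omega)
      rw [wdist_comm a hgen hinv] at this
      rw [hm, this]
      omega
    · have htm' : tm = 0 := by omega
      rw [htm', hg0, ← hz0]
      exact hmz 0 (by omega)
  have hd_plus : D ≤ wdist a m (g tp) := by
    by_cases hcase : t0 + 2 * D ≤ L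
    · have htp' : tp = t0 + 2 * D := by omega
      have : wdist a (g t0) (g tp) = tp - t0 := dg t0 tp htp1 htpL
      rw [hm, this]
      omega
    · have htp' : tp = L := by omega
      rw [htp', hgL, ← hzn]
      exact hmz n (by omega)
  -- close chain points at the endpoints
  obtain ⟨ja, hjan, hja⟩ := hf_ex tm
  have hjaD : wdist a (g tm) (z ja) ≤ D := by
    rw [hja]; exact hD_le tm (by omega)
  obtain ⟨jb, hjbn, hjb⟩ := hf_ex tp
  have hjbD : wdist a (g tp) (z jb) ≤ D := by
    rw [hjb]; exact hD_le tp htpL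
  set i0 : ℕ := min ja jb with hi0
  set j0 : ℕ := max ja jb with hj0
  set s : ℕ := j0 - i0 with hs
  -- bound on s
  have hdab : wdist a (z ja) (z jb) ≤ 6 * D := by
    have h1 : wdist a (z ja) (g tm) ≤ D := by
      rw [wdist_comm a hgen hinv]; exact hjaD
    have h2 : wdist a (g tm) (g tp) = tp - tm := dg tm tp (by omega) htpL
    have h3 : wdist a (z ja) (z jb) ≤
        wdist a (z ja) (g tm) + wdist a (g tm) (g tp) + wdist a (g tp) (z jb) := by
      have t1 := wdist_triangle a hgen (z ja) (g tm) (z jb)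
      have t2 := wdist_triangle a hgen (g tm) (g tp) (z jb)
      omega
    have h4 : tp - tm ≤ 4 * D := by omega
    omega
  have hzij : wdist a (z i0) (z j0) ≤ 6 * D := by
    rcases le_total ja jb with hab | hab
    · rw [hi0, hj0, min_eq_left hab, max_eq_right hab]; exact hdab
    · rw [hi0, hj0, min_eq_right hab, max_eq_left hab, wdist_comm a hgen hinv]; exact hdab
  have hsbound : (s : ℝ) ≤ C' * (6 * D + C') := by
    have hlow := dzlow i0 j0 (by omega) (by omega)
    have hup : (wdist a (z i0) (z j0) : ℝ) ≤ 6 * (D : ℝ) := by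
      exact_mod_cast Nat.cast_le.mpr hzij
    have hcast : ((j0 : ℝ) - i0) = (s : ℝ) := by
      rw [hs, Nat.cast_sub (by omega)]
    rw [hcast] at hlow
    have h7 : (s : ℝ) / C' ≤ 6 * (D : ℝ) + C' := by linarith
    have h8 := (div_le_iff₀ hC'0).mp h7
    rw [mul_comm] at h8
    exact h8
  -- the chain
  set N : ℕ := s + 2 with hN
  set idx : ℕ → ℕ := fun i => if ja ≤ jb then min (ja + i) jb else ja - i with hidx
  set c : ℕ → G := fun i => if i = 0 then g tm else if i ≤ s + 1 then z (idx (i - 1)) else g tp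
    with hc
  have hidx0 : idx 0 = ja := by
    simp only [hidx]; split_ifs with h' <;> omega
  have hidxs : idx s = jb := by
    simp only [hidx]
    split_ifs with h' <;> omega
  have hidxn : ∀ i, idx i ≤ n := by
    intro i
    simp only [hidx]; split_ifs with h' <;> omega
  have hidxstep : ∀ i, idx i = idx (i + 1) ∨ idx i + 1 = idx (i + 1) ∨ idx (i + 1) + 1 = idx i := by
    intro i
    simp only [hidx]; split_ifs with h' <;> omega
  -- chain endpoints
  have hc0 : c 0 = g tm := rfl
  have hcN : c N = g tp := by
    rw [hc, hN]
    norm_num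
  have hc1 : c 1 = z ja := by
    rw [hc]
    norm_num [hidx0]
  have hcs1 : c (s + 1) = z jb := by
    rw [hc]
    norm_num [hidxs]
  have hcmid : ∀ i, 1 ≤ i → i ≤ s + 1 → c i = z (idx (i - 1)) := by
    intro i h1 h2
    simp only [hc]
    rw [if_neg (by omega), if_pos h2]
  -- gap bounds along the chain
  set M : ℝ := max (D : ℝ) (2 * C') with hM
  have hgap : ∀ i, i < N → (wdist a (c i) (c (i + 1)) : ℝ) ≤ M := by
    intro i hiN
    rcases Nat.eq_zero_or_pos i with hi0' | hipos
    · subst hi0'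
      rw [hc0, hc1]
      exact le_trans (Nat.cast_le.mpr hjaD) (le_max_left _ _)
    · rcases Nat.lt_or_ge i (s + 1) with his | his
      · rw [hcmid i (by omega) (by omega), hcmid (i + 1) (by omega) (by omega),
          show i + 1 - 1 = i from by omega]
        have hstep := hidxstep (i - 1)
        rw [show i - 1 + 1 = i from by omega] at hstep
        rcases hstep with he | he | he
        · rw [he, wdist_self a]
          have h0 : (0 : ℝ) ≤ M := le_trans (Nat.cast_nonneg D) (le_max_left _ _)
          simpa using h0
        · rw [← he]
          refine le_trans (dzgap (idx (i - 1)) ?_) (le_max_right _ _)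
          have := hidxn i
          omega
        · rw [wdist_comm a hgen hinv, ← he]
          refine le_trans (dzgap (idx i) ?_) (le_max_right _ _)
          have := hidxn (i - 1)
          omega
      · have hieq : i = s + 1 := by omega
        subst hieq
        rw [hcs1, show s + 1 + 1 = N from by omega, hcN, wdist_comm a hgen hinv]
        exact le_trans (Nat.cast_le.mpr hjbD) (le_max_left _ _)
  -- distance from m to the chain points
  have hcm : ∀ i, i ≤ N → D ≤ wdist a m (c i) := by
    intro i hi
    rcases Nat.eq_zero_or_pos i with h0 | hpos
    · subst h0
      rw [hc0]
      exact hd_minus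
    · rcases Nat.lt_or_ge i N with hlt | hge
      · have hi1 : i ≤ s + 1 := by omega
        rw [hcmid i (by omega) hi1]
        exact hmz _ (hidxn _)
      · have hieq : i = N := by omega
        subst hieq
        rw [hcN]
        exact hd_plus
  -- Gromov product bounds
  have hgpE : ∀ i, i < N → (D : ℝ) - M / 2 ≤ Part4.gp a m (c i) (c (i + 1)) := by
    intro i hiN
    have h1 : (D : ℝ) ≤ wdist a m (c i) := Nat.cast_le.mpr (hcm i (by omega))
    have h2 : (D : ℝ) ≤ wdist a m (c (i + 1)) := Nat.cast_le.mpr (hcm (i + 1) (by omega))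
    have h3 := hgap i hiN
    unfold Part4.gp
    rw [wdist_comm a hgen hinv (c i) m, wdist_comm a hgen hinv (c (i + 1)) m]
    linarith
  have hgp0 : Part4.gp a m (c 0) (c N) = 0 := by
    rw [hc0, hcN]
    unfold Part4.gp
    have e1 : wdist a (g tm) m = t0 - tm := by
      rw [hm]
      exact dg tm t0 htm0 (by omega)
    have e2 : wdist a (g tp) m = tp - t0 := by
      rw [hm, wdist_comm a hgen hinv]
      exact dg t0 tp htp1 htpL
    have e3 : wdist a (g tm) (g tp) = tp - tm := dg tm tp (by omega) htpL
    rw [e1, e2, e3, Nat.cast_sub htm0, Nat.cast_sub htp1, Nat.cast_sub (le_trans htm0 htp1)]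
    ring
  -- apply the chain lemma
  set k : ℕ := Nat.clog 2 N with hk
  have hNk : N ≤ 2 ^ k := Nat.le_pow_clog (by norm_num) N
  have hchain := Part4.chain a hgen hinv hhyp' hδ'0 m ((D : ℝ) - M / 2) k N c
    (by omega) hNk hgpE
  rw [hgp0] at hchain
  have hM2 : M ≤ (D : ℝ) + 2 * C' := by
    rw [hM]
    apply max_le
    · have : (0 : ℝ) ≤ 2 * C' := by linarith
      linarith
    · have : (0 : ℝ) ≤ (D : ℝ) := Nat.cast_nonneg D
      linarith
  have hDkey : (D : ℝ) ≤ (D : ℝ) / 2 + C' + k * δ' := by linarith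
  have hN2' : 2 ≤ N := by omega
  have hNb : (N : ℝ) ≤ 6 * C' * D + C' ^ 2 + 2 := by
    have hNs : (N : ℝ) = (s : ℝ) + 2 := by rw [hN]; push_cast; ring
    have hexp : C' * (6 * (D : ℝ) + C') = 6 * C' * D + C' ^ 2 := by ring
    rw [hNs]
    rw [hexp] at hsbound
    linarith
  have hk1 : 1 ≤ k := Nat.clog_pos (by norm_num) (by omega)
  have hpowk : 2 ^ (k - 1) < N := by
    have hp' := Nat.pow_pred_clog_lt_self (by norm_num : (1 : ℕ) < 2) (by omega : 1 < N)
    rw [hk, ← Nat.pred_eq_sub_one]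
    exact hp'
  have hDε : (D : ℝ) ≤ ε := hεkey D k N hN2' hNb hpowk hk1 hDkey
  -- conclude for the given prefix
  set t : ℕ := p.length with ht
  have hpt : p = w.take t := List.prefix_iff_eq_take.mp hp
  have htL : t ≤ L := hp.length_le
  obtain ⟨j, hjn, hjd⟩ := hf_ex t
  obtain ⟨u, hu, hul⟩ := wlen_spec a hgen ((g t)⁻¹ * z j)
  refine ⟨u, ?_, ?_⟩
  · have h1 : wdist a (g t) (z j) ≤ D := by
      have := hD_le t htL
      omega
    have h2 : u.length = wdist a (g t) (z j) := hul
    calc (u.length : ℝ) = (wdist a (g t) (z j) : ℝ) := by rw [h2]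
      _ ≤ (D : ℝ) := Nat.cast_le.mpr h1
      _ ≤ ε := hDε
  · have hevp : evalWord a p = g t := by rw [hpt]
    rw [hevp, hu]
    have hfin : g t * ((g t)⁻¹ * z j) = z j := by group
    rw [hfin]
    exact hzH j
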